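/- Let A₀ be a real n×n matrix having at least one complex eigenvalue with positive real part, and let (A_ε)_{ε>0} be real n×n matrices with A_ε → A₀ as ε → 0⁺. Then there exists ε₀ > 0 such that for every ε ∈ (0, ε₀] the matrix I + ε A_ε has a complex eigenvalue of modulus strictly greater than 1. -/

import Mathlib

open Polynomial Matrix Filter Set

lemma charpoly_eval' {n : ℕ} (M : Matrix (Fin n) (Fin n) ℂ) (t : ℂ) :
    M.charpoly.eval t = (t • (1 : Matrix (Fin n) (Fin n) ℂ) - M).det := by
  rw [Matrix.charpoly, eval_det, Matrix.matPolyEquiv_charmatrix]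
  simp [Matrix.scalar_apply, Matrix.smul_eq_diagonal_mul]

lemma mem_spectrum_iff_det' {n : ℕ} (M : Matrix (Fin n) (Fin n) ℂ) (z : ℂ) :
    z ∈ spectrum ℂ M ↔ (z • (1 : Matrix (Fin n) (Fin n) ℂ) - M).det = 0 := by
  rw [spectrum.mem_iff, Matrix.isUnit_iff_isUnit_det, isUnit_iff_ne_zero, not_not,
    Algebra.algebraMap_eq_smul_one]

lemma multiset_pow_card_le_prod (s : Multiset ℝ) (a : ℝ) (ha : 0 ≤ a)
    (h : ∀ x ∈ s, a ≤ x) : a ^ Multiset.card s ≤ s.prod := by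
  induction s using Multiset.induction with
  | empty => simp
  | cons x s ih =>
    have hs := ih (fun y hy => h y (Multiset.mem_cons_of_mem hy))
    have hx := h x (Multiset.mem_cons_self x s)
    rw [Multiset.card_cons, Multiset.prod_cons, pow_succ, mul_comm]
    exact mul_le_mul hx hs (pow_nonneg ha _) (ha.trans hx)

lemma abs_det_ge_of_spectrum_re_nonpos {n : ℕ} (C : Matrix (Fin n) (Fin n) ℂ) (μ : ℂ)
    (hμ : 0 ≤ μ.re) (h : ∀ a ∈ spectrum ℂ C, a.re ≤ 0) :
    μ.re ^ n ≤ ‖(μ • (1 : Matrix (Fin n) (Fin n) ℂ) - C).det‖ := by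
  have hm := C.charpoly_monic
  have hs : (C.charpoly).Splits := IsAlgClosed.splits _
  have hcard : Multiset.card C.charpoly.roots = n := by
    rw [splits_iff_card_roots.mp hs, Matrix.charpoly_natDegree_eq_dim, Fintype.card_fin]
  have heval : C.charpoly.eval μ = (C.charpoly.roots.map (fun a => μ - a)).prod := by
    conv_lhs => rw [hs.eq_prod_roots_of_monic hm]
    rw [eval_multiset_prod, Multiset.map_map]
    simp
  rw [← charpoly_eval', heval, show ‖(C.charpoly.roots.map (fun a => μ - a)).prod‖ = _ from
    map_multiset_prod (normHom : ℂ →*₀ ℝ) _, Multiset.map_map]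
  have hc2 : Multiset.card (C.charpoly.roots.map
      (fun a => ‖μ - a‖)) = n := by
    rwa [Multiset.card_map]
  have hn : μ.re ^ n = μ.re ^ Multiset.card (Multiset.map
      (⇑(normHom : ℂ →*₀ ℝ) ∘ fun a => μ - a) C.charpoly.roots) := by
    rw [Multiset.card_map, hcard]
  rw [hn]
  refine multiset_pow_card_le_prod _ _ hμ ?_
  intro x hx
  obtain ⟨a, ha, rfl⟩ := Multiset.mem_map.mp hx
  have haroot : C.charpoly.IsRoot a := (mem_roots hm.ne_zero).mp ha
  have haspec : a ∈ spectrum ℂ C := by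
    rw [mem_spectrum_iff_det', ← charpoly_eval']
    exact haroot
  have hare := h a haspec
  calc (μ : ℂ).re ≤ (Function.comp (normHom : ℂ →*₀ ℝ) (fun a => μ - a) a : ℝ) := by
        simp only [Function.comp_apply]
        calc μ.re ≤ (μ - a).re := by simp [Complex.sub_re]; linarith
          _ ≤ ‖μ - a‖ := Complex.re_le_norm _
    _ = _ := rfl

/-- If the real matrix `A₀` has a complex eigenvalue with positive real
part and `A ε → A₀` as `ε → 0⁺`, then for all small `ε > 0` the matrix `I + ε • A ε`
has a complex eigenvalue of modulus strictly greater than `1`. -/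
theorem exists_eigenvalue_of_one_add_smul_gt_one
    (n : ℕ) (A₀ : Matrix (Fin n) (Fin n) ℝ)
    (hA₀ : ∃ μ ∈ spectrum ℂ (A₀.map Complex.ofReal), 0 < μ.re)
    (A : ℝ → Matrix (Fin n) (Fin n) ℝ)
    (hA : Filter.Tendsto A (nhdsWithin 0 (Set.Ioi 0)) (nhds A₀)) :
    ∃ ε₀ > (0 : ℝ), ∀ ε ∈ Set.Ioc (0 : ℝ) ε₀,
      ∃ μ ∈ spectrum ℂ (((1 : Matrix (Fin n) (Fin n) ℝ) + ε • A ε).map Complex.ofReal),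
        1 < ‖μ‖ := by
  obtain ⟨μ, hμs, hμre⟩ := hA₀
  by_contra h
  push_neg at h
  -- continuity of ε ↦ det (μ•1 - (A ε).map ofReal)
  have hcont : Continuous fun M : Matrix (Fin n) (Fin n) ℝ =>
      (μ • (1 : Matrix (Fin n) (Fin n) ℂ) - M.map Complex.ofReal).det := by
    exact (continuous_const.sub (continuous_id.matrix_map Complex.continuous_ofReal)).matrix_det
  have hdet0 : (μ • (1 : Matrix (Fin n) (Fin n) ℂ) - A₀.map Complex.ofReal).det = 0 :=
    (mem_spectrum_iff_det' _ _).mp hμs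
  have htend : Tendsto (fun ε => ‖
      ((μ • (1 : Matrix (Fin n) (Fin n) ℂ) - (A ε).map Complex.ofReal).det)‖)
      (nhdsWithin 0 (Set.Ioi 0)) (nhds 0) := by
    have := (continuous_norm.comp hcont).tendsto A₀
    have h2 := this.comp hA
    simpa [hdet0, Function.comp_def] using h2
  have hev : ∀ᶠ ε in nhdsWithin (0:ℝ) (Set.Ioi 0), ‖
      ((μ • (1 : Matrix (Fin n) (Fin n) ℂ) - (A ε).map Complex.ofReal).det)‖ < μ.re ^ n := by
    have hpos : (0:ℝ) < μ.re ^ n := pow_pos hμre n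
    exact htend.eventually_lt_const hpos
  have hfreq : ∃ᶠ ε in nhdsWithin (0:ℝ) (Set.Ioi 0),
      ∀ ν ∈ spectrum ℂ (((1 : Matrix (Fin n) (Fin n) ℝ) + ε • A ε).map Complex.ofReal),
        ‖ν‖ ≤ 1 := by
    rw [Filter.frequently_iff]
    intro U hU
    obtain ⟨u, hu, hsub⟩ := mem_nhdsGT_iff_exists_Ioc_subset.mp hU
    obtain ⟨ε, hε1, hε2⟩ := h u hu
    exact ⟨ε, hsub hε1, hε2⟩
  obtain ⟨ε, hP, hlt, hεpos⟩ :=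
    (hfreq.and_eventually (hev.and (eventually_mem_nhdsWithin))).exists
  rw [Set.mem_Ioi] at hεpos
  set Cm := (A ε).map Complex.ofReal with hCm
  -- map of 1 + ε • A ε
  have hmap : ((1 : Matrix (Fin n) (Fin n) ℝ) + ε • A ε).map Complex.ofReal
      = 1 + (ε : ℂ) • Cm := by
    ext i j
    simp [hCm, Matrix.map_apply, Matrix.one_apply, Matrix.add_apply, Matrix.smul_apply,
      apply_ite Complex.ofReal, Complex.ofReal_mul]
  -- all eigenvalues of Cm have nonpositive real part
  have hkey : ∀ a ∈ spectrum ℂ Cm, a.re ≤ 0 := by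
    intro a ha
    have hadet : (a • (1 : Matrix (Fin n) (Fin n) ℂ) - Cm).det = 0 :=
      (mem_spectrum_iff_det' _ _).mp ha
    have hmem : (1 + (ε:ℂ) * a) ∈
        spectrum ℂ (((1 : Matrix (Fin n) (Fin n) ℝ) + ε • A ε).map Complex.ofReal) := by
      rw [hmap, mem_spectrum_iff_det']
      have heq : (1 + (ε:ℂ) * a) • (1 : Matrix (Fin n) (Fin n) ℂ) - (1 + (ε : ℂ) • Cm)
          = (ε:ℂ) • (a • (1 : Matrix (Fin n) (Fin n) ℂ) - Cm) := by
        module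
      rw [heq, Matrix.det_smul, hadet, mul_zero]
    have habs := hP _ hmem
    have hre : (1 + (ε:ℂ) * a).re = 1 + ε * a.re := by
      simp [Complex.add_re, Complex.mul_re]
    have him : (1 + (ε:ℂ) * a).im = ε * a.im := by
      simp [Complex.add_im, Complex.mul_im]
    have hsq : (1 + ε * a.re) ^ 2 + (ε * a.im) ^ 2 ≤ 1 := by
      have h1 : ‖(1 + (ε:ℂ) * a)‖ ^ 2 ≤ 1 := by
        nlinarith [norm_nonneg (1 + (ε:ℂ) * a)]
      rw [Complex.sq_norm, Complex.normSq_apply, hre, him] at h1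
      nlinarith [h1]
    nlinarith [sq_nonneg (ε * a.im), sq_nonneg (ε * a.re), hεpos]
  have hge := abs_det_ge_of_spectrum_re_nonpos Cm μ hμre.le hkey
  linarith [hge, hlt]
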